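/- Let b ≥ 2 and m ≥ 2 be integers and set c := b^m. If X is a base-c Benford random variable, then X is also base-b Benford. -/

import Mathlib

open MeasureTheory

local instance fact_zero_lt_one_real : Fact ((0 : ℝ) < 1) := ⟨one_pos⟩

/-- Pushing forward Lebesgue measure on `[0,1)` along `t ↦ fract (m * t)` gives back
Lebesgue measure on `[0,1)`. -/
lemma map_fract_nat_mul (m : ℕ) (hm : m ≠ 0) :
    Measure.map (fun t : ℝ => Int.fract ((m : ℝ) * t)) (volume.restrict (Set.Ico (0 : ℝ) 1))
      = volume.restrict (Set.Ico (0 : ℝ) 1) := by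
  set μ : Measure ℝ := volume.restrict (Set.Ico (0 : ℝ) 1) with hμ
  have hQmeas : Measurable (fun x : ℝ => (x : AddCircle (1:ℝ))) := AddCircle.measurable_mk'
  -- the quotient map is measure preserving from μ to volume on the circle
  have hQ : MeasurePreserving (fun x : ℝ => (x : AddCircle (1:ℝ))) μ volume := by
    have h0 := AddCircle.measurePreserving_mk (1:ℝ) 0
    rw [zero_add] at h0
    have : μ = volume.restrict (Set.Ioc (0 : ℝ) 1) :=
      Measure.restrict_congr_set MeasureTheory.Ico_ae_eq_Ioc
    rw [this]
    exact h0
  -- the representative map from the circle back to [0,1)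
  set F : AddCircle (1:ℝ) → ℝ := fun y => ((AddCircle.equivIco (1:ℝ) 0 y : ℝ)) with hF
  have hFmeas : Measurable F :=
    measurable_subtype_coe.comp (AddCircle.measurableEquivIco (1:ℝ) 0).measurable
  have hFQ : ∀ x : ℝ, F ((x : AddCircle (1:ℝ))) = Int.fract x := by
    intro x
    simp [hF, AddCircle.coe_equivIco_mk_apply]
  have hmapF : Measure.map F volume = μ := by
    rw [← hQ.map_eq, Measure.map_map hFmeas hQmeas]
    have : (F ∘ fun x : ℝ => (x : AddCircle (1:ℝ))) = Int.fract := by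
      funext x; exact hFQ x
    rw [this]
    have hfr : Int.fract =ᵐ[μ] id := by
      refine (ae_restrict_iff' measurableSet_Ico).2 ?_
      filter_upwards with x hx
      exact Int.fract_eq_self.2 hx
    rw [Measure.map_congr hfr, Measure.map_id]
  -- multiplication by m on the circle is measure preserving
  have hS : MeasurePreserving (fun y : AddCircle (1:ℝ) => (m : ℤ) • y) volume volume :=
    MeasureTheory.Measure.measurePreserving_zsmul volume (by exact_mod_cast hm)
  have hSmeas : Measurable (fun y : AddCircle (1:ℝ) => (m : ℤ) • y) := hS.measurable
  -- the map in question factors through the circle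
  have hfact : (fun t : ℝ => Int.fract ((m : ℝ) * t))
      = F ∘ (fun y : AddCircle (1:ℝ) => (m : ℤ) • y) ∘ (fun x : ℝ => (x : AddCircle (1:ℝ))) := by
    funext t
    have : ((m : ℤ) • ((t : AddCircle (1:ℝ))) : AddCircle (1:ℝ)) = (((m : ℝ) * t : ℝ) : AddCircle (1:ℝ)) := by
      rw [← AddCircle.coe_zsmul]
      norm_num
    simp only [Function.comp_apply, this, hFQ]
  rw [hfact, ← Function.comp_assoc, ← Measure.map_map (hFmeas.comp hSmeas) hQmeas,
    hQ.map_eq, ← Measure.map_map hFmeas hSmeas, hS.map_eq, hmapF]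

/-- If `X` is base-`b^m` Benford (with `m ≥ 2`), then `X` is base-`b` Benford. -/
theorem benford_of_benford_pow_base
    {Ω : Type*} [MeasurableSpace Ω] (ℙ : Measure Ω) [IsProbabilityMeasure ℙ]
    (b m : ℕ) (hb : 2 ≤ b) (hm : 2 ≤ m)
    (X : Ω → ℝ) (hX : Measurable X)
    (hpos : ℙ {ω | 0 < X ω} = 1)
    (hben : Measure.map (fun ω => Int.fract (Real.logb (b ^ m : ℕ) (X ω))) ℙ
      = volume.restrict (Set.Ico (0 : ℝ) 1)) :
    Measure.map (fun ω => Int.fract (Real.logb b (X ω))) ℙ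
      = volume.restrict (Set.Ico (0 : ℝ) 1) := by
  have hm0 : (m : ℝ) ≠ 0 := by positivity
  -- logb b x = m * logb (b^m) x
  have hlog : ∀ x : ℝ, Real.logb b x = (m : ℝ) * Real.logb ((b ^ m : ℕ) : ℝ) x := by
    intro x
    rw [Real.logb, Real.logb]
    push_cast
    rw [Real.log_pow]
    rw [mul_div_assoc']
    rw [mul_div_mul_left _ _ hm0]
  -- fract (m * t) = fract (m * fract t)
  have hfr : ∀ t : ℝ, Int.fract ((m : ℝ) * t) = Int.fract ((m : ℝ) * Int.fract t) := by
    intro t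
    have : (m : ℝ) * t = (m : ℝ) * Int.fract t + ((m * ⌊t⌋ : ℤ) : ℝ) := by
      rw [Int.fract]
      push_cast
      ring
    rw [this, Int.fract_add_intCast]
  have hkey : (fun ω => Int.fract (Real.logb b (X ω)))
      = (fun t : ℝ => Int.fract ((m : ℝ) * t))
        ∘ (fun ω => Int.fract (Real.logb ((b ^ m : ℕ) : ℝ) (X ω))) := by
    funext ω
    rw [Function.comp_apply, hlog]
    exact hfr _
  have hmeas1 : Measurable (fun t : ℝ => Int.fract ((m : ℝ) * t)) :=
    (measurable_const_mul _).fract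
  have hmeas2 : Measurable (fun ω => Int.fract (Real.logb ((b ^ m : ℕ) : ℝ) (X ω))) :=
    ((Real.measurable_log.comp hX).div_const _).fract
  rw [hkey, ← Measure.map_map hmeas1 hmeas2, hben, map_fract_nat_mul m (by omega)]
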